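/- In the abstract RSI chain with the RSI initial distribution built from a given ψ⁰ : V → H, the iterates are unbiased with respect to source iteration: for every n ≥ 0 and every m ∈ V, the expectation of the Φ-component at index m under the law of the chain after n steps (a finite sum, since this law has finite support) equals φ^{(n)}_m, the n-th source-iteration iterate with initial datum φ^{(0)}_m = Σ_{k∈V} ω(k) K(k,m) • ψ⁰(k). -/
import Mathlib


open Finset

namespace RSI10

variable {V : Type*} [Fintype V] [DecidableEq V] {G : ℕ}
variable {H : Type*} [NormedAddCommGroup H] [NormedSpace ℝ H] [CompleteSpace H]

/-- Selections: one ordinate chosen from each group. -/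
abbrev Sel (grp : V → Fin G) := {v : Fin G → V // ∀ g, grp (v g) = g}

/-- `c^v(m) = Σ_g ω(v(g)) K(v(g), m)`. -/
def cf (grp : V → Fin G) (ω : V → ℝ) (K : V → V → ℝ) (v : Sel grp) (m : V) : ℝ :=
  ∑ g, ω (v.1 g) * K (v.1 g) m

/-- RSI selection probability `p^v(m)`. -/
noncomputable def pf (grp : V → Fin G) (ω : V → ℝ) (K : V → V → ℝ) (v : Sel grp) (m : V) : ℝ :=
  ω m * cf grp ω K v m /
    ∑ m' ∈ univ.filter (fun m' => grp m' = grp m), ω m' * cf grp ω K v m'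

/-- One deterministic step of the RSI chain given the newly drawn selection `v'`. -/
noncomputable def step (grp : V → Fin G) (ω : V → ℝ) (K : V → V → ℝ)
    (A : V → H →L[ℝ] H) (b : V → H)
    (s : Sel grp × (V → H)) (v' : Sel grp) : Sel grp × (V → H) :=
  (v', fun m => ∑ g, (ω (v'.1 g) * K (v'.1 g) m / pf grp ω K s.1 (v'.1 g)) •
      (A (v'.1 g) (s.2 (v'.1 g)) + b (v'.1 g)))

/-- Expectation of an `H`-valued observable of the RSI chain after `n` steps,
started from the state `s` (a finite sum, since the law has finite support). -/
noncomputable def exps (grp : V → Fin G) (ω : V → ℝ) (K : V → V → ℝ)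
    (A : V → H →L[ℝ] H) (b : V → H) :
    ℕ → ((Sel grp × (V → H)) → H) → (Sel grp × (V → H)) → H
  | 0, f, s => f s
  | n + 1, f, s => ∑ v' : Sel grp,
      (∏ g, pf grp ω K s.1 (v'.1 g)) • exps grp ω K A b n f (step grp ω K A b s v')

/-- Source iteration: `φ^{(n)}_m = Σ_k ω k K k m • (A_k φ^{(n-1)}_k + b_k)`. -/
noncomputable def phiSI (ω : V → ℝ) (K : V → V → ℝ)
    (A : V → H →L[ℝ] H) (b : V → H) (φ0 : V → H) : ℕ → V → H
  | 0 => φ0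
  | n + 1 => fun m => ∑ k, (ω k * K k m) • (A k (phiSI ω K A b φ0 n k) + b k)

/-- Cardinality `|V_g|` of group `g`. -/
def gcard (grp : V → Fin G) (g : Fin G) : ℕ := (univ.filter fun k => grp k = g).card

section PiLemmas

variable {ι : Type*} [Fintype ι] [DecidableEq ι] {S : ι → Type*} [∀ i, Fintype (S i)]
variable {H : Type*} [NormedAddCommGroup H] [NormedSpace ℝ H]

lemma sum_pi_prod (q : ∀ i, S i → ℝ) :
    ∑ x : (∀ i, S i), ∏ i, q i (x i) = ∏ i, ∑ a, q i a := by
  rw [Finset.prod_univ_sum (fun _ => univ) q, Fintype.piFinset_univ]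

lemma sum_pi_marked (q : ∀ i, S i → ℝ) (hq : ∀ i, ∑ a, q i a = 1)
    (i0 : ι) (F : S i0 → H) :
    ∑ x : (∀ i, S i), (∏ i, q i (x i)) • F (x i0) = ∑ a, q i0 a • F a := by
  rw [← Equiv.sum_comp (Equiv.piSplitAt i0 S).symm
    (fun x => (∏ i, q i (x i)) • F (x i0)), Fintype.sum_prod_type]
  have hsplit : ∀ (a : S i0) (y : ∀ j : {j // j ≠ i0}, S j),
      (∏ i, q i (((Equiv.piSplitAt i0 S).symm (a, y)) i))
        = q i0 a * ∏ j : {j // j ≠ i0}, q j (y j) := by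
    intro a y
    rw [Fintype.prod_eq_mul_prod_compl i0,
      Finset.prod_subtype (p := fun j => j ≠ i0) ({i0}ᶜ) (by simp)
        (fun j => q j (((Equiv.piSplitAt i0 S).symm (a, y)) j))]
    refine congrArg₂ (· * ·) ?_ (Finset.prod_congr rfl fun x _ => ?_)
    · simp
    · simp [Equiv.piSplitAt_symm_apply, x.2]
  have happ : ∀ (a : S i0) (y : ∀ j : {j // j ≠ i0}, S j),
      ((Equiv.piSplitAt i0 S).symm (a, y)) i0 = a := by
    intro a y; simp [Equiv.piSplitAt_symm_apply]
  have hone : ∑ y : (∀ j : {j // j ≠ i0}, S j), ∏ j : {j // j ≠ i0}, q j (y j) = 1 := by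
    rw [sum_pi_prod (fun j : {j // j ≠ i0} => q j)]
    exact Finset.prod_eq_one fun j _ => hq j
  calc ∑ a, ∑ y, (∏ i, q i (((Equiv.piSplitAt i0 S).symm (a, y)) i)) •
        F (((Equiv.piSplitAt i0 S).symm (a, y)) i0)
      = ∑ a, ∑ y : (∀ j : {j // j ≠ i0}, S j),
          (∏ j : {j // j ≠ i0}, q j (y j)) • (q i0 a • F a) := by
        refine Finset.sum_congr rfl fun a _ => Finset.sum_congr rfl fun y _ => ?_
        rw [hsplit, happ, mul_comm, mul_smul]
    _ = ∑ a, q i0 a • F a := by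
        refine Finset.sum_congr rfl fun a _ => ?_
        rw [← Finset.sum_smul, hone, one_smul]

end PiLemmas

/-- The equivalence between selections and dependent functions. -/
def selEquiv (grp : V → Fin G) : Sel grp ≃ ∀ g : Fin G, {k : V // grp k = g} where
  toFun v := fun g => ⟨v.1 g, v.2 g⟩
  invFun u := ⟨fun g => (u g).1, fun g => (u g).2⟩
  left_inv v := rfl
  right_inv u := rfl

lemma sum_sel_prod (grp : V → Fin G) (q : V → ℝ)
    (hq1 : ∀ g, ∑ k ∈ univ.filter (fun k => grp k = g), q k = 1) :
    ∑ v : Sel grp, ∏ g, q (v.1 g) = 1 := by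
  rw [← Equiv.sum_comp (selEquiv grp).symm (fun v : Sel grp => ∏ g, q (v.1 g))]
  have : ∀ u : ∀ g : Fin G, {k : V // grp k = g},
      (∏ g, q (((selEquiv grp).symm u).1 g)) = ∏ g, q ((u g).1) := fun u => rfl
  simp_rw [this]
  rw [sum_pi_prod (fun g (s : {k : V // grp k = g}) => q s.1)]
  refine Finset.prod_eq_one fun g _ => ?_
  rw [← Finset.sum_subtype (univ.filter (fun k => grp k = g)) (by simp) q]
  exact hq1 g

lemma sum_sel_marked (grp : V → Fin G) (q : V → ℝ)
    (hq1 : ∀ g, ∑ k ∈ univ.filter (fun k => grp k = g), q k = 1)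
    (g0 : Fin G) (F : V → H) :
    ∑ v : Sel grp, (∏ g, q (v.1 g)) • F (v.1 g0)
      = ∑ k ∈ univ.filter (fun k => grp k = g0), q k • F k := by
  rw [← Equiv.sum_comp (selEquiv grp).symm
    (fun v : Sel grp => (∏ g, q (v.1 g)) • F (v.1 g0))]
  have hq' : ∀ g, ∑ s : {k : V // grp k = g}, q s.1 = 1 := by
    intro g
    rw [← Finset.sum_subtype (univ.filter (fun k => grp k = g)) (by simp) q]
    exact hq1 g
  rw [show (fun u : ∀ g : Fin G, {k : V // grp k = g} =>
      (∏ g, q (((selEquiv grp).symm u).1 g)) • F (((selEquiv grp).symm u).1 g0))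
      = fun u => (∏ g, q ((u g).1)) • F ((u g0).1) from rfl,
    sum_pi_marked (fun g (s : {k : V // grp k = g}) => q s.1) hq' g0 (fun s => F s.1),
    Finset.sum_subtype (p := fun k => grp k = g0) (univ.filter (fun k => grp k = g0)) (by simp) (fun k => q k • F k)]

lemma sum_sel_smul_sum (grp : V → Fin G) (q : V → ℝ)
    (hq1 : ∀ g, ∑ k ∈ univ.filter (fun k => grp k = g), q k = 1)
    (F : Fin G → V → H) :
    ∑ v : Sel grp, (∏ g, q (v.1 g)) • (∑ g, F g (v.1 g))
      = ∑ g, ∑ k ∈ univ.filter (fun k => grp k = g), q k • F g k := by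
  simp_rw [Finset.smul_sum]
  rw [Finset.sum_comm]
  exact Finset.sum_congr rfl fun g _ => sum_sel_marked grp q hq1 g (F g)


section Main

variable (grp : V → Fin G) (ω : V → ℝ) (K : V → V → ℝ) (A : V → H →L[ℝ] H) (b : V → H)

lemma cf_pos (hω : ∀ k, 0 < ω k) (hK : ∀ k m, 0 < K k m) (v : Sel grp) (m : V) :
    0 < cf grp ω K v m := by
  have : Nonempty (Fin G) := ⟨grp m⟩
  exact Finset.sum_pos (fun g _ => mul_pos (hω _) (hK _ _)) univ_nonempty

lemma denom_pos (hω : ∀ k, 0 < ω k) (hK : ∀ k m, 0 < K k m) (v : Sel grp) (g : Fin G)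
    (hg : ∃ k, grp k = g) :
    0 < ∑ m' ∈ univ.filter (fun m' => grp m' = g), ω m' * cf grp ω K v m' := by
  obtain ⟨k0, hk0⟩ := hg
  exact Finset.sum_pos (fun k _ => mul_pos (hω _) (cf_pos grp ω K hω hK v k))
    ⟨k0, by simp [hk0]⟩

lemma pf_pos (hgrp : ∀ g : Fin G, ∃ k, grp k = g) (hω : ∀ k, 0 < ω k)
    (hK : ∀ k m, 0 < K k m) (v : Sel grp) (k : V) : 0 < pf grp ω K v k :=
  div_pos (mul_pos (hω _) (cf_pos grp ω K hω hK v k))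
    (denom_pos grp ω K hω hK v (grp k) (hgrp (grp k)))

lemma pf_sum_one (hgrp : ∀ g : Fin G, ∃ k, grp k = g) (hω : ∀ k, 0 < ω k)
    (hK : ∀ k m, 0 < K k m) (v : Sel grp) (g : Fin G) :
    ∑ k ∈ univ.filter (fun k => grp k = g), pf grp ω K v k = 1 := by
  have hD := denom_pos grp ω K hω hK v g (hgrp g)
  have : ∀ k ∈ univ.filter (fun k => grp k = g),
      pf grp ω K v k = ω k * cf grp ω K v k /
        ∑ m' ∈ univ.filter (fun m' => grp m' = g), ω m' * cf grp ω K v m' := by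
    intro k hk
    have hgk : grp k = g := (Finset.mem_filter.mp hk).2
    unfold pf
    rw [hgk]
  rw [Finset.sum_congr rfl this, ← Finset.sum_div, div_self hD.ne']

lemma Phi_mean (q : V → ℝ) (hq0 : ∀ k, q k ≠ 0)
    (hq1 : ∀ g, ∑ k ∈ univ.filter (fun k => grp k = g), q k = 1)
    (ψ : V → H) (m : V) :
    ∑ v : Sel grp, (∏ g, q (v.1 g)) •
        (∑ g, (ω (v.1 g) * K (v.1 g) m / q (v.1 g)) • ψ (v.1 g))
      = ∑ k, (ω k * K k m) • ψ k := by
  rw [sum_sel_smul_sum grp q hq1 (fun _ k => (ω k * K k m / q k) • ψ k)]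
  have : ∀ (g : Fin G), ∀ k ∈ univ.filter (fun k => grp k = g),
      q k • (ω k * K k m / q k) • ψ k = (ω k * K k m) • ψ k := by
    intro g k _
    rw [smul_smul]
    congr 1
    rw [mul_comm, div_mul_cancel₀ _ (hq0 k)]
  rw [Finset.sum_congr rfl (fun g _ => Finset.sum_congr rfl (this g))]
  exact Finset.sum_fiberwise univ grp (fun k => (ω k * K k m) • ψ k)

lemma phiSI_succ_apply (φ0 : V → H) (n : ℕ) (m : V) :
    phiSI ω K A b φ0 (n + 1) m
      = ∑ k, (ω k * K k m) • (A k (phiSI ω K A b φ0 n k) + b k) := rfl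

lemma phiSI_shift (φ0 : V → H) (n : ℕ) :
    phiSI ω K A b φ0 (n + 1)
      = phiSI ω K A b (fun m => ∑ k, (ω k * K k m) • (A k (φ0 k) + b k)) n := by
  induction n with
  | zero => rfl
  | succ n ih =>
      funext m
      rw [phiSI_succ_apply, phiSI_succ_apply]
      simp_rw [ih]

lemma phiSI_affine {ι : Type*} [Fintype ι] (c : ι → ℝ) (hc : ∑ i, c i = 1)
    (φ : ι → V → H) (n : ℕ) :
    ∀ m, ∑ i, c i • phiSI ω K A b (φ i) n m
      = phiSI ω K A b (fun k => ∑ i, c i • φ i k) n m := by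
  induction n with
  | zero => intro m; rfl
  | succ n ih =>
      intro m
      rw [phiSI_succ_apply]
      have hterm : ∀ k : V,
          (ω k * K k m) • (A k (phiSI ω K A b (fun k' => ∑ i, c i • φ i k') n k) + b k)
            = ∑ i, c i • ((ω k * K k m) • (A k (phiSI ω K A b (φ i) n k) + b k)) := by
        intro k
        rw [← ih k, map_sum]
        have hb : (b k) = ∑ i, c i • b k := by rw [← Finset.sum_smul, hc, one_smul]
        calc (ω k * K k m) • (∑ i, A k (c i • phiSI ω K A b (φ i) n k) + b k)
            = (ω k * K k m) • (∑ i, c i • A k (phiSI ω K A b (φ i) n k) + ∑ i, c i • b k) := by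
              rw [← hb]; simp_rw [map_smul]
          _ = (ω k * K k m) • ∑ i, c i • (A k (phiSI ω K A b (φ i) n k) + b k) := by
              rw [← Finset.sum_add_distrib]; simp_rw [smul_add]
          _ = ∑ i, c i • ((ω k * K k m) • (A k (phiSI ω K A b (φ i) n k) + b k)) := by
              rw [Finset.smul_sum]; simp_rw [smul_comm (ω k * K k m)]
      rw [Finset.sum_congr rfl (fun k _ => hterm k), Finset.sum_comm]
      exact Finset.sum_congr rfl fun i _ => by
        rw [← Finset.smul_sum, phiSI_succ_apply]

lemma key (hgrp : ∀ g : Fin G, ∃ k, grp k = g) (hω : ∀ k, 0 < ω k)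
    (hK : ∀ k m, 0 < K k m) (n : ℕ) :
    ∀ (q : V → ℝ), (∀ k, q k ≠ 0) →
      (∀ g, ∑ k ∈ univ.filter (fun k => grp k = g), q k = 1) →
      ∀ (ψ : V → H) (m : V),
      ∑ v : Sel grp, (∏ g, q (v.1 g)) •
          exps grp ω K A b n (fun s => s.2 m)
            (v, fun m' => ∑ g, (ω (v.1 g) * K (v.1 g) m' / q (v.1 g)) • ψ (v.1 g))
        = phiSI ω K A b (fun m' => ∑ k, (ω k * K k m') • ψ k) n m := by
  induction n with
  | zero =>
      intro q hq0 hq1 ψ m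
      exact Phi_mean grp ω K q hq0 hq1 ψ m
  | succ n ih =>
      intro q hq0 hq1 ψ m
      have hstep : ∀ v : Sel grp,
          exps grp ω K A b (n + 1) (fun s => s.2 m)
            (v, fun m' => ∑ g, (ω (v.1 g) * K (v.1 g) m' / q (v.1 g)) • ψ (v.1 g))
          = phiSI ω K A b
              (fun m' => ∑ k, (ω k * K k m') •
                (A k (∑ g, (ω (v.1 g) * K (v.1 g) k / q (v.1 g)) • ψ (v.1 g)) + b k)) n m := by
        intro v
        show (∑ v' : Sel grp, (∏ g, pf grp ω K v (v'.1 g)) •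
            exps grp ω K A b n (fun s => s.2 m) _) = _
        exact ih (pf grp ω K v) (fun k => (pf_pos grp ω K hgrp hω hK v k).ne')
          (pf_sum_one grp ω K hgrp hω hK v)
          (fun k => A k (∑ g, (ω (v.1 g) * K (v.1 g) k / q (v.1 g)) • ψ (v.1 g)) + b k) m
      rw [Finset.sum_congr rfl (fun v _ => by rw [hstep v])]
      have hback : ∀ v : Sel grp,
          phiSI ω K A b
              (fun m' => ∑ k, (ω k * K k m') •
                (A k (∑ g, (ω (v.1 g) * K (v.1 g) k / q (v.1 g)) • ψ (v.1 g)) + b k)) n m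
          = phiSI ω K A b
              (fun m' => ∑ g, (ω (v.1 g) * K (v.1 g) m' / q (v.1 g)) • ψ (v.1 g)) (n + 1) m := by
        intro v
        rw [phiSI_shift]
      rw [Finset.sum_congr rfl (fun v _ => by rw [hback v]),
        phiSI_affine ω K A b (fun v : Sel grp => ∏ g, q (v.1 g)) (sum_sel_prod grp q hq1),
        phiSI_shift, ← phiSI_shift]
      congr 1
      funext k
      exact Phi_mean grp ω K q hq0 hq1 ψ k

end Main

/-- Theorem 2.1 (unbiasedness of RSI with respect to SI), for the abstract RSI
chain: the expectation of the `Φ`-component at index `m` after `n` steps of the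
RSI chain, started from the RSI initial distribution built from `ψ0`
(uniform independent choice of `v⁰(g)` in each group, and
`Φ⁰_m = Σ_g |V_g| ω(v⁰(g)) K(v⁰(g), m) • ψ0(v⁰(g))`), equals the `n`-th
source-iteration iterate with initial datum `φ^{(0)}_m = Σ_k ω k K k m • ψ0 k`. -/
theorem rsi_unbiased
    (grp : V → Fin G) (hgrp : ∀ g : Fin G, ∃ k, grp k = g)
    (ω : V → ℝ) (hω : ∀ k, 0 < ω k)
    (K : V → V → ℝ) (hK : ∀ k m, 0 < K k m)
    (A : V → H →L[ℝ] H) (b : V → H)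
    (ψ0 : V → H) (n : ℕ) (m : V) :
    ∑ v0 : Sel grp,
        (∏ g, ((gcard grp g : ℝ))⁻¹) •
          exps grp ω K A b n (fun s => s.2 m)
            (v0, fun m' => ∑ g,
              ((gcard grp g : ℝ) * (ω (v0.1 g) * K (v0.1 g) m')) • ψ0 (v0.1 g))
      = phiSI ω K A b (fun m' => ∑ k, (ω k * K k m') • ψ0 k) n m := by
  have hcard : ∀ g : Fin G, (0 : ℝ) < (gcard grp g : ℝ) := by
    intro g
    obtain ⟨k, hk⟩ := hgrp g
    have : 0 < gcard grp g := Finset.card_pos.mpr ⟨k, by simp [hk]⟩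
    exact_mod_cast this
  set q : V → ℝ := fun k => ((gcard grp (grp k) : ℝ))⁻¹ with hqdef
  have hq0 : ∀ k, q k ≠ 0 := fun k => inv_ne_zero (hcard (grp k)).ne'
  have hq1 : ∀ g, ∑ k ∈ univ.filter (fun k => grp k = g), q k = 1 := by
    intro g
    have h1 : ∀ k ∈ univ.filter (fun k => grp k = g), q k = ((gcard grp g : ℝ))⁻¹ := by
      intro k hk
      simp [hqdef, (Finset.mem_filter.mp hk).2]
    rw [Finset.sum_congr rfl h1, Finset.sum_const, nsmul_eq_mul,
      show (univ.filter (fun k => grp k = g)).card = gcard grp g from rfl]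
    exact mul_inv_cancel₀ (hcard g).ne'
  rw [← key grp ω K A b hgrp hω hK n q hq0 hq1 ψ0 m]
  refine Finset.sum_congr rfl fun v0 _ => ?_
  have hqv : ∀ g : Fin G, q (v0.1 g) = ((gcard grp g : ℝ))⁻¹ := by
    intro g; simp [hqdef, v0.2 g]
  congr 1
  · exact Finset.prod_congr rfl fun g _ => (hqv g).symm
  · refine congrArg (fun Φ : V → H => exps grp ω K A b n (fun s => s.2 m) (v0, Φ)) ?_
    funext m'
    refine Finset.sum_congr rfl fun g _ => ?_
    congr 1
    rw [hqv g, div_eq_mul_inv, inv_inv]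
    ring

end RSI10
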